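/- Let V be a nonzero finite-dimensional real inner product space and let R be a finite subset of V ∖ {0} such that R spans V and, for every α ∈ R, the orthogonal reflection s_α(v) = v − (2⟨v,α⟩/⟨α,α⟩)·α maps R into R. Assume R is irreducible, i.e. R cannot be written as a union of two nonempty subsets R₁ and R₂ with ⟨α, β⟩ = 0 for all α ∈ R₁ and β ∈ R₂. Let W be the subgroup of GL(V) generated by {s_α : α ∈ R}. Then the only linear subspaces of V invariant under W are 0 and V (so V is an irreducible representation of W), and the subspace of W-fixed vectors {v ∈ V : w(v) = v for all w ∈ W} is 0. -/

import Mathlib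

open scoped RealInnerProductSpace

section Reflections

variable {V : Type*} [NormedAddCommGroup V] [InnerProductSpace ℝ V]

/-- The orthogonal reflection `v ↦ v - (2⟪v,α⟫/⟪α,α⟫)·α` attached to `α`, as a linear map. -/
noncomputable def sReflAux (α : V) : V →ₗ[ℝ] V :=
  LinearMap.id -
    (((2 / ⟪α, α⟫) • ((innerSL ℝ α : V →L[ℝ] ℝ) : V →ₗ[ℝ] ℝ)).smulRight α)

lemma sReflAux_apply (α v : V) :
    sReflAux α v = v - (2 * ⟪v, α⟫ / ⟪α, α⟫) • α := by
  have h : (2 / ⟪α, α⟫) * ⟪α, v⟫ = 2 * ⟪v, α⟫ / ⟪α, α⟫ := by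
    rw [real_inner_comm α v]; ring
  simp only [sReflAux, LinearMap.sub_apply, LinearMap.id_apply, LinearMap.smulRight_apply,
    LinearMap.smul_apply, ContinuousLinearMap.coe_coe, innerSL_apply_apply, smul_eq_mul, h]

lemma sReflAux_sReflAux (α v : V) : sReflAux α (sReflAux α v) = v := by
  rcases eq_or_ne (⟪α, α⟫) 0 with hb | hb
  · have hα : α = 0 := inner_self_eq_zero.mp hb
    simp [sReflAux_apply, hα]
  · rw [sReflAux_apply, sReflAux_apply]
    have h1 : ⟪v - (2 * ⟪v, α⟫ / ⟪α, α⟫) • α, α⟫ = -⟪v, α⟫ := by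
      rw [inner_sub_left, real_inner_smul_left]
      field_simp
      ring
    rw [h1]
    have h2 : 2 * -⟪v, α⟫ / ⟪α, α⟫ = -(2 * ⟪v, α⟫ / ⟪α, α⟫) := by ring
    rw [h2, neg_smul]
    abel

/-- The orthogonal reflection attached to `α`, as a linear automorphism of `V`. -/
noncomputable def sRefl (α : V) : V ≃ₗ[ℝ] V :=
  LinearEquiv.ofLinear (sReflAux α) (sReflAux α)
    (LinearMap.ext fun v => by simp [LinearMap.comp_apply, sReflAux_sReflAux])
    (LinearMap.ext fun v => by simp [LinearMap.comp_apply, sReflAux_sReflAux])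

lemma sRefl_apply (α v : V) :
    sRefl α v = v - (2 * ⟪v, α⟫ / ⟪α, α⟫) • α :=
  sReflAux_apply α v

end Reflections

/-- For an irreducible root system `R` spanning a nonzero finite-dimensional real inner
product space `V`, the Weyl group `W` generated by the reflections `s_α` (for `α ∈ R`) acts
irreducibly on `V`, and the subspace of `W`-fixed vectors is zero. -/
theorem weyl_group_acts_irreducibly
    {V : Type*} [NormedAddCommGroup V] [InnerProductSpace ℝ V] [FiniteDimensional ℝ V]
    [Nontrivial V]
    (R : Finset V) (hR0 : ∀ α ∈ R, α ≠ 0)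
    (hspan : Submodule.span ℝ (R : Set V) = ⊤)
    (hstab : ∀ α ∈ R, ∀ β ∈ R, sRefl α β ∈ R)
    (hirred : ¬ ∃ R₁ R₂ : Set V, R₁.Nonempty ∧ R₂.Nonempty ∧ (R : Set V) = R₁ ∪ R₂ ∧
      ∀ α ∈ R₁, ∀ β ∈ R₂, ⟪α, β⟫ = 0)
    (W : Subgroup (V ≃ₗ[ℝ] V))
    (hWdef : W = Subgroup.closure {g : V ≃ₗ[ℝ] V | ∃ α ∈ R, g = sRefl α}) :
    (∀ U : Submodule ℝ V, (∀ w ∈ W, ∀ u ∈ U, w u ∈ U) → U = ⊥ ∨ U = ⊤) ∧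
      ∀ v : V, (∀ w ∈ W, w v = v) → v = 0 := by
  have hsW : ∀ α ∈ R, sRefl α ∈ W := by
    intro α hα
    rw [hWdef]
    exact Subgroup.subset_closure ⟨α, hα, rfl⟩
  constructor
  · intro U hU
    have key : ∀ α ∈ R, α ∈ U ∨ α ∈ Uᗮ := by
      intro α hα
      by_cases h : ∀ u ∈ U, ⟪u, α⟫ = 0
      · exact Or.inr (Submodule.mem_orthogonal U α |>.mpr h)
      · left
        push_neg at h
        obtain ⟨u, hu, hne⟩ := h
        have h1 : sRefl α u ∈ U := hU _ (hsW α hα) u hu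
        have h2 : u - sRefl α u ∈ U := U.sub_mem hu h1
        rw [sRefl_apply] at h2
        have h3 : u - (u - (2 * ⟪u, α⟫ / ⟪α, α⟫) • α) = (2 * ⟪u, α⟫ / ⟪α, α⟫) • α := by
          abel
        rw [h3] at h2
        have hαα : ⟪α, α⟫ ≠ 0 := fun hc => hR0 α hα (inner_self_eq_zero.mp hc)
        have hc : (2 * ⟪u, α⟫ / ⟪α, α⟫) ≠ 0 := by
          exact div_ne_zero (mul_ne_zero two_ne_zero hne) hαα
        have := U.smul_mem (2 * ⟪u, α⟫ / ⟪α, α⟫)⁻¹ h2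
        rwa [inv_smul_smul₀ hc] at this
    by_cases hall : ∀ α ∈ R, α ∈ U
    · right
      rw [← top_le_iff, ← hspan, Submodule.span_le]
      exact fun α hα => hall α hα
    · left
      push_neg at hall
      obtain ⟨β, hβR, hβU⟩ := hall
      have hβ : β ∈ Uᗮ := (key β hβR).resolve_left hβU
      by_cases hall' : ∀ α ∈ R, α ∈ Uᗮ
      · have : Submodule.span ℝ (R : Set V) ≤ Uᗮ := Submodule.span_le.mpr fun α hα => hall' α hα
        rw [hspan, top_le_iff] at this
        rw [Submodule.orthogonal_eq_top_iff] at this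
        exact this
      · exfalso
        push_neg at hall'
        obtain ⟨γ, hγR, hγU⟩ := hall'
        have hγ : γ ∈ U := (key γ hγR).resolve_right hγU
        refine hirred ⟨(R : Set V) ∩ U, (R : Set V) ∩ Uᗮ, ⟨γ, hγR, hγ⟩, ⟨β, hβR, hβ⟩, ?_, ?_⟩
        · ext α
          constructor
          · intro hα
            rcases key α hα with h | h
            · exact Or.inl ⟨hα, h⟩
            · exact Or.inr ⟨hα, h⟩
          · rintro (⟨h, _⟩ | ⟨h, _⟩) <;> exact h
        · rintro α ⟨-, hαU⟩ b ⟨-, hbU⟩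
          exact (Submodule.mem_orthogonal U b).mp hbU α hαU
  · intro v hv
    have horth : ∀ α ∈ R, ⟪v, α⟫ = 0 := by
      intro α hα
      have h := hv _ (hsW α hα)
      rw [sRefl_apply, sub_eq_self] at h
      have hαα : ⟪α, α⟫ ≠ 0 := fun hc => hR0 α hα (inner_self_eq_zero.mp hc)
      rcases smul_eq_zero.mp h with h | h
      · field_simp at h
        linarith
      · exact absurd h (hR0 α hα)
    have : ∀ u ∈ Submodule.span ℝ (R : Set V), ⟪v, u⟫ = 0 := by
      intro u hu
      induction hu using Submodule.span_induction with
      | mem x hx => exact horth x hx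
      | zero => simp
      | add x y _ _ hx hy => rw [inner_add_right, hx, hy, add_zero]
      | smul c x _ hx => rw [real_inner_smul_right, hx, mul_zero]
    have hvv : ⟪v, v⟫ = 0 := this v (by rw [hspan]; trivial)
    exact inner_self_eq_zero.mp hvv
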